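/- Let α be a peak composition of n. Then RW_r(α) := {w_r(T) : T ∈ SPIT(α)}, viewed as a subset of S_n, is the left weak Bruhat interval [w_r(T^sink_α), w_r(T^source_α)]_L. -/

import Mathlib

namespace PaperSPIT

/-- The `j`-th part (1-indexed) of a composition presented as a list. -/
def part (α : List ℕ) (j : ℕ) : ℕ := α.getD (j - 1) 0

/-- The largest part. -/
def maxPart (α : List ℕ) : ℕ := α.foldr max 0

/-- The composition diagram: boxes `(i, j)` (column `i`, row `j`), both 1-indexed,
rows numbered from bottom to top. -/
def cd (α : List ℕ) : Finset (ℕ × ℕ) :=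
  (Finset.Icc 1 (maxPart α) ×ˢ Finset.Icc 1 α.length).filter fun p => p.1 ≤ part α p.2

/-- `α` is a composition of `n`. -/
def IsComposition (n : ℕ) (α : List ℕ) : Prop :=
  (∀ a ∈ α, 0 < a) ∧ α.sum = n

/-- `α` is a peak composition of `n`: all parts except possibly the last are `> 1`. -/
def IsPeakComposition (n : ℕ) (α : List ℕ) : Prop :=
  IsComposition n α ∧ ∀ i, i + 1 < α.length → 1 < α.getD i 0

/-- A standard filling of `cd α`: a bijection from the boxes onto `{1, …, n}`
(normalized to be `0` off the diagram). -/
def IsStandardFilling (α : List ℕ) (T : ℕ × ℕ → ℕ) : Prop :=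
  Set.BijOn T (cd α : Set (ℕ × ℕ)) (Set.Icc 1 α.sum) ∧
  ∀ p : ℕ × ℕ, p ∉ cd α → T p = 0

def RowsIncrease (α : List ℕ) (T : ℕ × ℕ → ℕ) : Prop :=
  ∀ i j : ℕ, (i, j) ∈ cd α → (i + 1, j) ∈ cd α → T (i, j) < T (i + 1, j)

def RowsWeaklyIncrease (α : List ℕ) (T : ℕ × ℕ → ℕ) : Prop :=
  ∀ i j : ℕ, (i, j) ∈ cd α → (i + 1, j) ∈ cd α → T (i, j) ≤ T (i + 1, j)

def FirstColIncreases (α : List ℕ) (T : ℕ × ℕ → ℕ) : Prop :=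
  ∀ j : ℕ, (1, j) ∈ cd α → (1, j + 1) ∈ cd α → T (1, j) < T (1, j + 1)

/-- Standard immaculate tableau. -/
def IsSIT (α : List ℕ) (T : ℕ × ℕ → ℕ) : Prop :=
  IsStandardFilling α T ∧ RowsIncrease α T ∧ FirstColIncreases α T

/-- Peak-tableau condition: for every `1 ≤ k ≤ n` the boxes with entries `≤ k`
form the diagram of a peak composition. -/
def PeakCond (α : List ℕ) (T : ℕ × ℕ → ℕ) : Prop :=
  ∀ k : ℕ, 1 ≤ k → k ≤ α.sum → ∃ β : List ℕ,
    IsPeakComposition k β ∧ (cd α).filter (fun p => T p ≤ k) = cd β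

/-- Standard peak immaculate tableau. -/
def IsSPIT (α : List ℕ) (T : ℕ × ℕ → ℕ) : Prop := IsSIT α T ∧ PeakCond α T

def SPITset (α : List ℕ) : Set (ℕ × ℕ → ℕ) := {T | IsSPIT α T}

/-- The Young triple condition. -/
def YoungTriple (α : List ℕ) (T : ℕ × ℕ → ℕ) : Prop :=
  ∀ k i j : ℕ, i < j → (k, j) ∈ cd α → (k + 1, i) ∈ cd α → T (k, j) ≤ T (k + 1, i) →
    (k + 1, j) ∈ cd α ∧ T (k + 1, j) < T (k + 1, i)

/-- Standard Young composition tableau. -/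
def IsSYCT (α : List ℕ) (T : ℕ × ℕ → ℕ) : Prop :=
  IsStandardFilling α T ∧ RowsIncrease α T ∧ FirstColIncreases α T ∧ YoungTriple α T

def SYCTset (α : List ℕ) : Set (ℕ × ℕ → ℕ) := {T | IsSYCT α T}

/-- Standard peak Young composition tableau. -/
def IsSPYCT (α : List ℕ) (T : ℕ × ℕ → ℕ) : Prop := IsSYCT α T ∧ PeakCond α T

def SPYCTset (α : List ℕ) : Set (ℕ × ℕ → ℕ) := {T | IsSPYCT α T}

/-- Row reading word `w_r`: rows from top to bottom, each row left to right. -/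
def wR (α : List ℕ) (T : ℕ × ℕ → ℕ) : List ℕ :=
  ((List.range α.length).reverse.map fun j =>
    (List.range (part α (j + 1))).map fun i => T (i + 1, j + 1)).flatten

/-- The `i`-th column of a filling, read bottom to top. -/
def colList (α : List ℕ) (T : ℕ × ℕ → ℕ) (i : ℕ) : List ℕ :=
  ((List.range α.length).filter fun j => decide (i ≤ part α (j + 1))).map
    fun j => T (i, j + 1)

/-- Column reading word `w_c`: columns left to right, each column bottom to top. -/
def wC (α : List ℕ) (T : ℕ × ℕ → ℕ) : List ℕ :=
  ((List.range (maxPart α)).map fun i => colList α T (i + 1)).flatten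

/-- Young reading word `w_Y`: first column top to bottom, then subsequent columns
bottom to top, columns left to right. -/
def wY (α : List ℕ) (T : ℕ × ℕ → ℕ) : List ℕ :=
  (colList α T 1).reverse ++
    ((List.range (maxPart α - 1)).map fun i => colList α T (i + 2)).flatten

/-- Descent set of a word with distinct letters: `i` such that `i` and `i+1` occur
and `i` occurs to the right of `i+1`. -/
def DesWord (w : List ℕ) : Finset ℕ :=
  w.toFinset.filter fun i => (i + 1) ∈ w ∧ w.idxOf (i + 1) < w.idxOf i


/-- A word of length `n` with distinct letters `1,…,n`, identified with an element of `S_n`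
in one-line notation. -/
def IsPermWord (n : ℕ) (w : List ℕ) : Prop := w.Perm (List.range' 1 n)

/-- Inversions of a word (1-indexed positions): pairs `(i,j)` with `i < j` and the letter at
position `i` larger than the letter at position `j`. -/
def InvW (w : List ℕ) : Set (ℕ × ℕ) :=
  {q | 1 ≤ q.1 ∧ q.1 < q.2 ∧ q.2 ≤ w.length ∧ w.getD (q.2 - 1) 0 < w.getD (q.1 - 1) 0}

/-- The set of column reading words of SPITs of shape `α`. -/
def RWc (α : List ℕ) : Set (List ℕ) := {w | ∃ T ∈ SPITset α, w = wC α T}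

/-- The set of row reading words of SPITs of shape `α`. -/
def RWr (α : List ℕ) : Set (List ℕ) := {w | ∃ T ∈ SPITset α, w = wR α T}

/-- The SPIT `T^source_α`: boxes filled with `1,…,n`, rows from bottom to top,
left to right within each row. -/
def Tsource (α : List ℕ) : ℕ × ℕ → ℕ := fun p =>
  if p ∈ cd α then (α.take (p.2 - 1)).sum + p.1 else 0

/-- The number of boxes in the second column. -/
def col2Len (α : List ℕ) : ℕ := ((cd α).filter fun p => p.1 = 2).card

/-- The SPIT `T^sink_α`: column 1 gets the odd numbers `1,3,…` bottom to top, column 2 the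
even numbers `2,4,…` bottom to top, and the remaining numbers fill the remaining boxes row
by row starting from the top row, increasing consecutively from left to right in each row. -/
def Tsink (α : List ℕ) : ℕ × ℕ → ℕ := fun p =>
  if p ∈ cd α then
    if p.1 = 1 then 2 * p.2 - 1
    else if p.1 = 2 then 2 * p.2
    else α.length + col2Len α + (((α.drop p.2).map fun a => a - 2).sum) + (p.1 - 2)
  else 0

/-! ### Section 1: basic lemmas about `part`, `maxPart`, `cd`, drop sums -/

/-- Sum of the parts strictly above row `j` (rows `j+1, …, ℓ`). -/
def D (α : List ℕ) (j : ℕ) : ℕ := (α.drop j).sum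

lemma part_eq_getD (α : List ℕ) (j : ℕ) : part α (j + 1) = α.getD j 0 := by
  simp [part]

lemma mem_of_part (α : List ℕ) {j : ℕ} (h1 : 1 ≤ j) (h2 : j ≤ α.length) :
    part α j ∈ α := by
  have : j - 1 < α.length := by omega
  rw [part, List.getD_eq_getElem _ _ this]
  exact List.getElem_mem _

lemma le_maxPart {α : List ℕ} {a : ℕ} (h : a ∈ α) : a ≤ maxPart α := by
  induction α with
  | nil => simp at h
  | cons b l ih =>
    have : maxPart (b :: l) = max b (maxPart l) := by simp [maxPart]
    rw [this]
    rcases List.mem_cons.1 h with rfl | h'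
    · exact le_max_left _ _
    · exact le_trans (ih h') (le_max_right _ _)

lemma part_le_maxPart (α : List ℕ) {j : ℕ} (h1 : 1 ≤ j) (h2 : j ≤ α.length) :
    part α j ≤ maxPart α := le_maxPart (mem_of_part α h1 h2)

lemma mem_cd (α : List ℕ) (i j : ℕ) :
    (i, j) ∈ cd α ↔ 1 ≤ i ∧ 1 ≤ j ∧ j ≤ α.length ∧ i ≤ part α j := by
  simp only [cd, Finset.mem_filter, Finset.mem_product, Finset.mem_Icc]
  constructor
  · rintro ⟨⟨⟨hi1, _⟩, hj1, hj2⟩, hle⟩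
    exact ⟨hi1, hj1, hj2, hle⟩
  · rintro ⟨hi1, hj1, hj2, hle⟩
    exact ⟨⟨⟨hi1, hle.trans (part_le_maxPart α hj1 hj2)⟩, hj1, hj2⟩, hle⟩

lemma D_succ (α : List ℕ) {j : ℕ} (h : j < α.length) :
    D α j = part α (j + 1) + D α (j + 1) := by
  rw [D, D, List.drop_eq_getElem_cons h, List.sum_cons, part_eq_getD,
    List.getD_eq_getElem _ _ h]

lemma D_len (α : List ℕ) {j : ℕ} (h : α.length ≤ j) : D α j = 0 := by
  simp [D, List.drop_eq_nil_of_le h]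

lemma D_succ_le (α : List ℕ) (j : ℕ) : D α (j + 1) ≤ D α j := by
  rcases Nat.lt_or_ge j α.length with h | h
  · rw [D_succ α h]; omega
  · rw [D_len α (by omega), D_len α h]

lemma D_anti (α : List ℕ) {j j' : ℕ} (h : j ≤ j') : D α j' ≤ D α j := by
  induction j' with
  | zero => have : j = 0 := by omega
            rw [this]
  | succ m ih =>
    rcases Nat.eq_or_lt_of_le h with rfl | h'
    · exact le_refl _
    · exact le_trans (D_succ_le α m) (ih (by omega))

lemma D_zero (α : List ℕ) : D α 0 = α.sum := by simp [D]


/-! ### Section 2: reading word positions -/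

lemma part_cons (a : ℕ) (l : List ℕ) (j : ℕ) : part (a :: l) (j + 2) = part l (j + 1) := by
  simp [part]

lemma part_cons_one (a : ℕ) (l : List ℕ) : part (a :: l) 1 = a := by simp [part]

lemma D_cons (a : ℕ) (l : List ℕ) (j : ℕ) : D (a :: l) (j + 1) = D l j := by simp [D]

lemma pos_lt (α : List ℕ) {j i : ℕ} (hj : j < α.length) (hi : i < part α (j + 1)) :
    D α (j + 1) + i < α.sum := by
  have h1 : D α j = part α (j + 1) + D α (j + 1) := D_succ α hj
  have h2 : D α j ≤ α.sum := by rw [← D_zero α]; exact D_anti α (Nat.zero_le _)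
  omega

lemma pos_inj (α : List ℕ) {j i j' i' : ℕ} (hj : j < α.length) (hi : i < part α (j + 1))
    (hj' : j' < α.length) (hi' : i' < part α (j' + 1))
    (heq : D α (j + 1) + i = D α (j' + 1) + i') : j = j' ∧ i = i' := by
  have key : ∀ {a b c d : ℕ}, a < b → b < α.length → d < part α (b + 1) →
      D α (a + 1) + c ≠ D α (b + 1) + d := by
    intro a b c d hab hb hd
    have h1 : D α b = part α (b + 1) + D α (b + 1) := D_succ α hb
    have h2 : D α b ≤ D α (a + 1) := D_anti α (by omega)
    omega
  rcases Nat.lt_trichotomy j j' with h | h | h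
  · exact absurd heq (key h hj' hi')
  · refine ⟨h, ?_⟩
    subst h
    omega
  · exact absurd heq.symm (key h hj hi)

lemma pos_exists (α : List ℕ) {q : ℕ} (hq : q < α.sum) :
    ∃ j, j < α.length ∧ ∃ i, i < part α (j + 1) ∧ q = D α (j + 1) + i := by
  induction α generalizing q with
  | nil => simp at hq
  | cons a l ih =>
    rcases Nat.lt_or_ge q l.sum with h | h
    · obtain ⟨j, hj, i, hi, rfl⟩ := ih h
      refine ⟨j + 1, by simpa using Nat.succ_lt_succ hj, i, ?_, ?_⟩
      · rwa [part_cons]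
      · rw [D_cons]
    · refine ⟨0, by simp, q - l.sum, ?_, ?_⟩
      · rw [part_cons_one]
        have hs : (a :: l).sum = a + l.sum := by simp
        omega
      · rw [D_cons, D_zero]
        omega

lemma wR_cons (a : ℕ) (l : List ℕ) (T : ℕ × ℕ → ℕ) :
    wR (a :: l) T =
      wR l (fun p => T (p.1, p.2 + 1)) ++ (List.range a).map (fun i => T (i + 1, 1)) := by
  simp only [wR, List.length_cons, List.range_succ_eq_map, List.reverse_cons,
    ← List.map_reverse, List.map_append, List.flatten_append, List.map_map]
  refine congrArg₂ (· ++ ·) ?_ ?_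
  · refine congrArg List.flatten ?_
    apply List.map_congr_left
    intro j _
    simp only [Function.comp_apply]
    rw [part_cons]
  · simp [part_cons_one]

lemma wR_length (α : List ℕ) (T : ℕ × ℕ → ℕ) : (wR α T).length = α.sum := by
  induction α generalizing T with
  | nil => simp [wR]
  | cons a l ih => rw [wR_cons]; simp [ih]; omega

lemma wR_getD (α : List ℕ) (T : ℕ × ℕ → ℕ) {j i : ℕ} (hj : j < α.length)
    (hi : i < part α (j + 1)) :
    (wR α T).getD (D α (j + 1) + i) 0 = T (i + 1, j + 1) := by
  induction α generalizing T j with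
  | nil => simp at hj
  | cons a l ih =>
    rw [wR_cons]
    rcases j with _ | j'
    · have hD : D (a :: l) 1 = l.sum := by simp [D]
      have hlen : (wR l fun p => T (p.1, p.2 + 1)).length = l.sum := wR_length _ _
      rw [hD, ← hlen, List.getD_append_right _ _ _ _ (Nat.le_add_right _ i), Nat.add_sub_cancel_left]
      have hia : i < a := by simpa [part] using hi
      rw [List.getD_eq_getElem _ _ (by simpa using hia)]
      simp
    · have hD : D (a :: l) (j' + 2) = D l (j' + 1) := by simp [D, List.drop_succ_cons]
      have hj'l : j' < l.length := by simpa using hj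
      have hi' : i < part l (j' + 1) := by simpa [part] using hi
      have hlt : D l (j' + 1) + i < l.sum := pos_lt l hj'l hi'
      have hlen : (wR l fun p => T (p.1, p.2 + 1)).length = l.sum := wR_length _ _
      rw [hD, List.getD_append _ _ _ _ (by omega)]
      exact ih _ hj'l hi'

/-! ### Section 3: perm-word facts -/

lemma mem_range'_iff {x n : ℕ} : x ∈ List.range' 1 n ↔ 1 ≤ x ∧ x ≤ n := by
  rw [List.mem_range'_1]; omega

lemma permWord_length {n : ℕ} {w : List ℕ} (h : IsPermWord n w) : w.length = n := by
  have := h.length_eq; simpa using this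

lemma permWord_nodup {n : ℕ} {w : List ℕ} (h : IsPermWord n w) : w.Nodup :=
  h.nodup_iff.2 (List.nodup_range' (s := 1) (n := n))

lemma permWord_mem {n : ℕ} {w : List ℕ} (h : IsPermWord n w) {x : ℕ} :
    x ∈ w ↔ 1 ≤ x ∧ x ≤ n := by
  rw [h.mem_iff, mem_range'_iff]

lemma getD_mem_of_lt {w : List ℕ} {q : ℕ} (h : q < w.length) : w.getD q 0 ∈ w := by
  rw [List.getD_eq_getElem _ _ h]; exact List.getElem_mem _

lemma nodup_getD_ne {w : List ℕ} (hw : w.Nodup) {p q : ℕ} (hp : p < w.length)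
    (hq : q < w.length) (hne : p ≠ q) : w.getD p 0 ≠ w.getD q 0 := by
  rw [List.getD_eq_getElem _ _ hp, List.getD_eq_getElem _ _ hq]
  intro h
  exact hne (hw.getElem_inj_iff.1 h)

/-- For a standard filling, the reading word is a permutation word. -/
lemma wR_isPermWord {α : List ℕ} {T : ℕ × ℕ → ℕ} (hT : IsStandardFilling α T) :
    IsPermWord α.sum (wR α T) := by
  apply List.perm_of_nodup_nodup_toFinset_eq ?_ (List.nodup_range' (s := 1) (n := α.sum))
  · -- toFinset equality
    ext x
    rw [List.mem_toFinset, List.mem_toFinset, mem_range'_iff]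
    constructor
    · intro hx
      obtain ⟨q, hq, hval⟩ := List.mem_iff_getElem.1 hx
      have hq' : q < α.sum := by rwa [wR_length] at hq
      obtain ⟨j, hj, i, hi, rfl⟩ := pos_exists α hq'
      have := wR_getD α T hj hi
      rw [List.getD_eq_getElem _ _ hq] at this
      have hmem : (i + 1, j + 1) ∈ cd α :=
        (mem_cd α _ _).2 ⟨by omega, by omega, by omega, by omega⟩
      have := hT.1.mapsTo hmem
      simp only [Set.mem_Icc] at this
      omega
    · rintro ⟨hx1, hx2⟩
      obtain ⟨p, hp, hTp⟩ := hT.1.surjOn (by exact Set.mem_Icc.2 ⟨hx1, hx2⟩)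
      have hpcd := (mem_cd α p.1 p.2).1 hp
      have hj : p.2 - 1 < α.length := by omega
      have hi : p.1 - 1 < part α (p.2 - 1 + 1) := by
        have : p.2 - 1 + 1 = p.2 := by omega
        rw [this]; omega
      have hget := wR_getD α T hj hi
      have hpfix : (p.1 - 1 + 1, p.2 - 1 + 1) = p := by
        obtain ⟨p1, p2⟩ := p
        simp only [Prod.mk.injEq]
        constructor <;> simp at hpcd ⊢ <;> omega
      rw [hpfix, hTp] at hget
      rw [← hget]
      exact getD_mem_of_lt (by rw [wR_length]; exact pos_lt α hj hi)
  · -- nodup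
    rw [List.nodup_iff_injective_getElem]
    rintro ⟨q1, hq1⟩ ⟨q2, hq2⟩ hval
    simp only [Fin.mk.injEq]
    by_contra hne
    rw [wR_length] at hq1 hq2
    obtain ⟨j1, hj1, i1, hi1, rfl⟩ := pos_exists α hq1
    obtain ⟨j2, hj2, i2, hi2, rfl⟩ := pos_exists α hq2
    have e1 := wR_getD α T hj1 hi1
    have e2 := wR_getD α T hj2 hi2
    rw [List.getD_eq_getElem _ _ (by rw [wR_length]; exact pos_lt α hj1 hi1)] at e1
    rw [List.getD_eq_getElem _ _ (by rw [wR_length]; exact pos_lt α hj2 hi2)] at e2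
    have hc1 : (i1 + 1, j1 + 1) ∈ cd α := (mem_cd α _ _).2 ⟨by omega, by omega, by omega, by omega⟩
    have hc2 : (i2 + 1, j2 + 1) ∈ cd α := (mem_cd α _ _).2 ⟨by omega, by omega, by omega, by omega⟩
    simp only at hval
    rw [e1, e2] at hval
    have : ((i1 + 1 : ℕ), (j1 + 1 : ℕ)) = ((i2 + 1 : ℕ), (j2 + 1 : ℕ)) :=
      hT.1.injOn hc1 hc2 hval
    have hji : j1 = j2 ∧ i1 = i2 := by
      simp only [Prod.mk.injEq] at this
      omega
    exact hne (by rw [hji.1, hji.2])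

/-! ### Section 4: values of `Tsource` and `Tsink`, comparison lemmas -/

lemma part_pos_of_comp {n : ℕ} {α : List ℕ} (h : IsComposition n α) {j : ℕ}
    (h1 : 1 ≤ j) (h2 : j ≤ α.length) : 1 ≤ part α j :=
  h.1 _ (mem_of_part α h1 h2)

lemma part_two_of_peak {n : ℕ} {α : List ℕ} (h : IsPeakComposition n α) {j : ℕ}
    (h1 : 1 ≤ j) (h2 : j < α.length) : 2 ≤ part α j := by
  have := h.2 (j - 1) (by omega)
  have hp : part α j = α.getD (j - 1) 0 := rfl
  omega

/-- `Sr α j` : sum over rows above `j` of `(part - 2)`. -/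
def Sr (α : List ℕ) (j : ℕ) : ℕ := ((α.drop j).map fun a => a - 2).sum

lemma Sr_succ (α : List ℕ) {j : ℕ} (h : j < α.length) :
    Sr α j = (part α (j + 1) - 2) + Sr α (j + 1) := by
  rw [Sr, Sr, List.drop_eq_getElem_cons h, List.map_cons, List.sum_cons, part_eq_getD,
    List.getD_eq_getElem _ _ h]

lemma Sr_len (α : List ℕ) {j : ℕ} (h : α.length ≤ j) : Sr α j = 0 := by
  simp [Sr, List.drop_eq_nil_of_le h]

lemma Sr_succ_le (α : List ℕ) (j : ℕ) : Sr α (j + 1) ≤ Sr α j := by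
  rcases Nat.lt_or_ge j α.length with h | h
  · rw [Sr_succ α h]; omega
  · rw [Sr_len α (by omega), Sr_len α h]

lemma Sr_anti (α : List ℕ) {j j' : ℕ} (h : j ≤ j') : Sr α j' ≤ Sr α j := by
  induction j' with
  | zero => have : j = 0 := by omega
            rw [this]
  | succ m ih =>
    rcases Nat.eq_or_lt_of_le h with rfl | h'
    · exact le_refl _
    · exact le_trans (Sr_succ_le α m) (ih (by omega))

lemma Sr_ge (α : List ℕ) {jb ja : ℕ} (h : jb < ja) (h2 : ja ≤ α.length) :
    (part α ja - 2) + Sr α ja ≤ Sr α jb := by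
  have h3 : ja - 1 < α.length := by omega
  have h4 : Sr α (ja - 1) = (part α ja - 2) + Sr α ja := by
    have := Sr_succ α h3
    have hj : ja - 1 + 1 = ja := by omega
    rwa [hj] at this
  have := Sr_anti α (show jb ≤ ja - 1 by omega)
  omega

/-- `col2Len` as a count of rows. -/
lemma col2Len_eq (α : List ℕ) :
    col2Len α = ((Finset.Icc 1 α.length).filter fun j => 2 ≤ part α j).card := by
  rw [col2Len]
  apply Finset.card_bij (fun p _ => p.2)
  · rintro ⟨i, j⟩ hp
    simp only [Finset.mem_filter] at hp
    obtain ⟨hcd, hi2⟩ := hp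
    rw [mem_cd] at hcd
    simp only [Finset.mem_filter, Finset.mem_Icc]
    refine ⟨⟨hcd.2.1, hcd.2.2.1⟩, ?_⟩
    omega
  · rintro ⟨i, j⟩ hp ⟨i', j'⟩ hp' h
    simp only [Finset.mem_filter] at hp hp'
    simp only at h
    simp [hp.2, hp'.2, h]
  · intro j hj
    simp only [Finset.mem_filter, Finset.mem_Icc] at hj
    refine ⟨(2, j), ?_, rfl⟩
    simp only [Finset.mem_filter]
    exact ⟨(mem_cd α 2 j).2 ⟨by omega, hj.1.1, hj.1.2, hj.2⟩, by trivial⟩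

lemma col2Len_le (α : List ℕ) : col2Len α ≤ α.length := by
  rw [col2Len_eq]
  calc ((Finset.Icc 1 α.length).filter fun j => 2 ≤ part α j).card
      ≤ (Finset.Icc 1 α.length).card := Finset.card_filter_le _ _
    _ = α.length := by rw [Nat.card_Icc]; omega

lemma row_le_col2Len {n : ℕ} {α : List ℕ} (hpk : IsPeakComposition n α) {j : ℕ}
    (h1 : 1 ≤ j) (h2 : j ≤ α.length) (h3 : 2 ≤ part α j) : j ≤ col2Len α := by
  rw [col2Len_eq]
  have hsub : Finset.Icc 1 j ⊆ (Finset.Icc 1 α.length).filter fun j' => 2 ≤ part α j' := by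
    intro j' hj'
    simp only [Finset.mem_Icc] at hj'
    simp only [Finset.mem_filter, Finset.mem_Icc]
    refine ⟨⟨hj'.1, by omega⟩, ?_⟩
    rcases Nat.lt_or_ge j' α.length with h | h
    · exact part_two_of_peak hpk hj'.1 h
    · have : j' = α.length := by omega
      have : j' = j := by omega
      subst this
      exact h3
  calc j = (Finset.Icc 1 j).card := by rw [Nat.card_Icc]; omega
    _ ≤ _ := Finset.card_le_card hsub

lemma col2Len_ge {n : ℕ} {α : List ℕ} (hpk : IsPeakComposition n α) :
    α.length - 1 ≤ col2Len α := by
  rcases Nat.lt_or_ge α.length 2 with h | h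
  · omega
  · have := row_le_col2Len hpk (j := α.length - 1) (by omega) (by omega)
      (part_two_of_peak hpk (by omega) (by omega))
    omega

/-! values -/

lemma src_val {α : List ℕ} {i j : ℕ} (h : (i, j) ∈ cd α) :
    Tsource α (i, j) = (α.take (j - 1)).sum + i := by
  rw [Tsource, if_pos h]

lemma sink_val1 {α : List ℕ} {j : ℕ} (h : (1, j) ∈ cd α) :
    Tsink α (1, j) = 2 * j - 1 := by
  rw [Tsink, if_pos h]; norm_num

lemma sink_val2 {α : List ℕ} {j : ℕ} (h : (2, j) ∈ cd α) :
    Tsink α (2, j) = 2 * j := by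
  rw [Tsink, if_pos h]; norm_num

lemma sink_val3 {α : List ℕ} {i j : ℕ} (h : (i, j) ∈ cd α) (hi : 3 ≤ i) :
    Tsink α (i, j) = α.length + col2Len α + Sr α j + (i - 2) := by
  rw [Tsink, if_pos h]
  have h1 : ¬ i = 1 := by omega
  have h2 : ¬ i = 2 := by omega
  simp only [h1, h2, if_false]
  rfl

/-- Upper bound for sink entries in the first two columns. -/
lemma sink_small_le {n : ℕ} {α : List ℕ} (hpk : IsPeakComposition n α) {i j : ℕ}
    (h : (i, j) ∈ cd α) (hi : i ≤ 2) : Tsink α (i, j) ≤ α.length + col2Len α := by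
  have hcd := (mem_cd α i j).1 h
  have hi1 : 1 ≤ i := hcd.1
  interval_cases i
  · rw [sink_val1 h]
    have := col2Len_ge hpk
    omega
  · rw [sink_val2 h]
    have := row_le_col2Len hpk hcd.2.1 hcd.2.2.1 hcd.2.2.2
    omega

/-- Lower bound for sink entries in columns `≥ 3`. -/
lemma sink_rest_ge {α : List ℕ} {i j : ℕ} (h : (i, j) ∈ cd α) (hi : 3 ≤ i) :
    α.length + col2Len α + 1 ≤ Tsink α (i, j) := by
  rw [sink_val3 h hi]
  omega

/-- F1: entries in columns ≤ 2 of lower rows are smaller than anything in higher rows. -/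
lemma sink_F1 {n : ℕ} {α : List ℕ} (hpk : IsPeakComposition n α) {ia ja ib jb : ℕ}
    (ha : (ia, ja) ∈ cd α) (hb : (ib, jb) ∈ cd α) (hj : jb < ja) (hib : ib ≤ 2) :
    Tsink α (ib, jb) < Tsink α (ia, ja) := by
  have hcda := (mem_cd α ia ja).1 ha
  have hcdb := (mem_cd α ib jb).1 hb
  have hib1 : 1 ≤ ib := hcdb.1
  have hvb : Tsink α (ib, jb) ≤ 2 * jb := by
    interval_cases ib
    · rw [sink_val1 hb]; omega
    · rw [sink_val2 hb]
  rcases Nat.lt_or_ge ia 3 with h3 | h3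
  · have hia1 : 1 ≤ ia := hcda.1
    have hva : 2 * ja - 1 ≤ Tsink α (ia, ja) := by
      interval_cases ia
      · rw [sink_val1 ha]
      · rw [sink_val2 ha]; omega
    omega
  · have := sink_rest_ge ha h3
    have := col2Len_ge hpk
    omega

/-- F2a: sink rows are increasing. -/
lemma sink_F2a {n : ℕ} {α : List ℕ} (hpk : IsPeakComposition n α) {ia ib j : ℕ}
    (ha : (ia, j) ∈ cd α) (hb : (ib, j) ∈ cd α) (hij : ia < ib) :
    Tsink α (ia, j) < Tsink α (ib, j) := by
  have hcda := (mem_cd α ia j).1 ha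
  rcases Nat.lt_or_ge ib 3 with h3 | h3
  · have hia : ia = 1 := by omega
    have hib : ib = 2 := by omega
    subst hia; subst hib
    rw [sink_val1 ha, sink_val2 hb]
    have := (mem_cd α 1 j).1 ha
    omega
  · rcases Nat.lt_or_ge ia 3 with ha3 | ha3
    · exact lt_of_le_of_lt (sink_small_le hpk ha (by omega))
        (lt_of_lt_of_le (by omega) (sink_rest_ge hb h3))
    · rw [sink_val3 ha ha3, sink_val3 hb h3]
      omega

/-- F2b: sink entries in columns ≥ 3 of lower rows dominate everything above. -/
lemma sink_F2b {n : ℕ} {α : List ℕ} (hpk : IsPeakComposition n α) {ia ja ib jb : ℕ}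
    (ha : (ia, ja) ∈ cd α) (hb : (ib, jb) ∈ cd α) (hj : jb < ja) (hib : 3 ≤ ib) :
    Tsink α (ia, ja) < Tsink α (ib, jb) := by
  have hcda := (mem_cd α ia ja).1 ha
  rcases Nat.lt_or_ge ia 3 with h3 | h3
  · exact lt_of_le_of_lt (sink_small_le hpk ha (by omega))
      (lt_of_lt_of_le (by omega) (sink_rest_ge hb hib))
  · rw [sink_val3 ha h3, sink_val3 hb hib]
    have h1 : (part α ja - 2) + Sr α ja ≤ Sr α jb := Sr_ge α hj hcda.2.2.1
    have h2 : ia ≤ part α ja := hcda.2.2.2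
    omega

/-- Source rows are increasing. -/
lemma src_row {α : List ℕ} {ia ib j : ℕ} (ha : (ia, j) ∈ cd α) (hb : (ib, j) ∈ cd α)
    (hij : ia < ib) : Tsource α (ia, j) < Tsource α (ib, j) := by
  rw [src_val ha, src_val hb]; omega

/-- Source: everything in a higher row is larger. -/
lemma src_cross {α : List ℕ} {ia ja ib jb : ℕ} (ha : (ia, ja) ∈ cd α)
    (hb : (ib, jb) ∈ cd α) (hj : jb < ja) : Tsource α (ib, jb) < Tsource α (ia, ja) := by
  have hcda := (mem_cd α ia ja).1 ha
  have hcdb := (mem_cd α ib jb).1 hb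
  rw [src_val ha, src_val hb]
  have h1 : (α.take jb).sum = (α.take (jb - 1)).sum + part α jb := by
    have hlt : jb - 1 < α.length := by omega
    have := List.sum_take_succ α (jb - 1) hlt
    have hj1 : jb - 1 + 1 = jb := by omega
    rw [hj1] at this
    rw [this, part, List.getD_eq_getElem _ _ hlt]
  have h2 : (α.take jb).sum ≤ (α.take (ja - 1)).sum := List.monotone_sum_take α (by omega)
  have h3 : ib ≤ part α jb := hcdb.2.2.2
  have h4 : 1 ≤ ia := hcda.1
  omega

/-! ### Section 5: tableau chains -/

lemma row_chain {α : List ℕ} {T : ℕ × ℕ → ℕ} (hrow : RowsIncrease α T) {j : ℕ} :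
    ∀ i' i, 1 ≤ i → i < i' → (i', j) ∈ cd α → T (i, j) < T (i', j) := by
  intro i'
  induction i' with
  | zero => intro i _ h _; omega
  | succ m ih =>
    intro i hi1 hii h
    have hcd := (mem_cd α (m + 1) j).1 h
    have hm : (m, j) ∈ cd α := (mem_cd α m j).2 ⟨by omega, hcd.2.1, hcd.2.2.1, by omega⟩
    rcases Nat.eq_or_lt_of_le (show i ≤ m by omega) with rfl | him
    · exact hrow i j hm h
    · exact lt_trans (ih i hi1 him hm) (hrow m j hm h)

lemma row_chain_le {α : List ℕ} {T : ℕ × ℕ → ℕ} (hrow : RowsIncrease α T) {j i i' : ℕ}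
    (hi1 : 1 ≤ i) (hii : i ≤ i') (h : (i', j) ∈ cd α) : T (i, j) ≤ T (i', j) := by
  rcases Nat.eq_or_lt_of_le hii with rfl | h'
  · exact le_refl _
  · exact le_of_lt (row_chain hrow i' i hi1 h' h)

lemma col_chain {n : ℕ} {α : List ℕ} (hpk : IsPeakComposition n α) {T : ℕ × ℕ → ℕ}
    (hcol : FirstColIncreases α T) :
    ∀ j' j, 1 ≤ j → j < j' → (1, j') ∈ cd α → T (1, j) < T (1, j') := by
  intro j'
  induction j' with
  | zero => intro j _ h _; omega
  | succ m ih =>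
    intro j hj1 hjj h
    have hcd := (mem_cd α 1 (m + 1)).1 h
    have hm : (1, m) ∈ cd α := (mem_cd α 1 m).2
      ⟨le_refl _, by omega, by omega, part_pos_of_comp hpk.1 (by omega) (by omega)⟩
    rcases Nat.eq_or_lt_of_le (show j ≤ m by omega) with rfl | hjm
    · exact hcol j hm h
    · exact lt_trans (ih j hj1 hjm hm) (hcol m hm h)

lemma col_chain_le {n : ℕ} {α : List ℕ} (hpk : IsPeakComposition n α) {T : ℕ × ℕ → ℕ}
    (hcol : FirstColIncreases α T) {j j' : ℕ} (hj1 : 1 ≤ j) (hjj : j ≤ j')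
    (h : (1, j') ∈ cd α) : T (1, j) ≤ T (1, j') := by
  rcases Nat.eq_or_lt_of_le hjj with rfl | h'
  · exact le_refl _
  · exact le_of_lt (col_chain hpk hcol j' j hj1 h' h)

/-- The key consequence of the peak-tableau condition:
the first entry of row `j+1` beats the second entry of row `j`. -/
lemma tabC {n : ℕ} {α : List ℕ} (hpk : IsPeakComposition n α) {T : ℕ × ℕ → ℕ}
    (hT : IsSPIT α T) {j : ℕ} (hj1 : 1 ≤ j) (hj : j + 1 ≤ α.length) :
    T (2, j) < T (1, j + 1) := by
  have h2j : (2, j) ∈ cd α := (mem_cd α 2 j).2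
    ⟨by omega, hj1, by omega, part_two_of_peak hpk hj1 (by omega)⟩
  have h1j1 : (1, j + 1) ∈ cd α := (mem_cd α 1 (j + 1)).2
    ⟨le_refl _, by omega, hj, part_pos_of_comp hpk.1 (by omega) hj⟩
  have h1j : (1, j) ∈ cd α := (mem_cd α 1 j).2
    ⟨le_refl _, hj1, by omega, part_pos_of_comp hpk.1 hj1 (by omega)⟩
  set k := T (1, j + 1) with hk
  have hkIcc : k ∈ Set.Icc 1 α.sum := hT.1.1.1.mapsTo h1j1
  simp only [Set.mem_Icc] at hkIcc
  obtain ⟨β, hβpk, hβeq⟩ := hT.2 k hkIcc.1 hkIcc.2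
  by_contra hge
  have hne : T (2, j) ≠ k := by
    intro h
    have := hT.1.1.1.injOn h2j h1j1 h
    simp at this
  have hgt : k < T (2, j) := by omega
  have m1 : (1, j + 1) ∈ cd β := by
    rw [← hβeq, Finset.mem_filter]
    exact ⟨h1j1, le_refl _⟩
  have m2 : (1, j) ∈ cd β := by
    rw [← hβeq, Finset.mem_filter]
    exact ⟨h1j, le_of_lt (hT.1.2.2 j h1j h1j1)⟩
  have m3 : (2, j) ∉ cd β := by
    rw [← hβeq, Finset.mem_filter]
    rintro ⟨-, hle⟩
    omega
  have hb1 := (mem_cd β 1 (j + 1)).1 m1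
  have hb3 : ¬ (1 ≤ 2 ∧ 1 ≤ j ∧ j ≤ β.length ∧ 2 ≤ part β j) := fun hh => m3 ((mem_cd β 2 j).2 hh)
  have hpartj : part β j ≤ 1 := by
    by_contra hh
    exact hb3 ⟨by omega, hj1, by omega, by omega⟩
  have := hβpk.2 (j - 1) (by omega)
  have hpartj' : part β j = β.getD (j - 1) 0 := rfl
  omega

/-- Column 2 of row `j` is smaller than column 1 of any higher row `j'`. -/
lemma cross_chain {n : ℕ} {α : List ℕ} (hpk : IsPeakComposition n α) {T : ℕ × ℕ → ℕ}
    (hT : IsSPIT α T) {j : ℕ} :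
    ∀ j', 1 ≤ j → j < j' → j' ≤ α.length → T (2, j) < T (1, j') := by
  intro j'
  induction j' with
  | zero => intro _ h _; omega
  | succ m ih =>
    intro hj1 hjj hj'
    rcases Nat.eq_or_lt_of_le (show j ≤ m by omega) with rfl | hjm
    · exact tabC hpk hT hj1 hj'
    · have h1m : (1, m) ∈ cd α := (mem_cd α 1 m).2
        ⟨le_refl _, by omega, by omega, part_pos_of_comp hpk.1 (by omega) (by omega)⟩
      have h2m : (2, m) ∈ cd α := (mem_cd α 2 m).2
        ⟨by omega, by omega, by omega, part_two_of_peak hpk (by omega) (by omega)⟩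
      calc T (2, j) < T (1, m) := ih (by omega) hjm (by omega)
        _ < T (2, m) := hT.1.2.1 1 m h1m h2m
        _ < T (1, m + 1) := tabC hpk hT (by omega) hj'

/-! ### Section 6: inversion set comparisons -/

lemma pos_order (α : List ℕ) {jp ip jq iq : ℕ} (hjq : jq < α.length)
    (hiq : iq < part α (jq + 1))
    (h : D α (jp + 1) + ip < D α (jq + 1) + iq) : jq < jp ∨ (jq = jp ∧ ip < iq) := by
  rcases Nat.lt_trichotomy jp jq with hh | hh | hh
  · exfalso
    have h1 : D α jq = part α (jq + 1) + D α (jq + 1) := D_succ α hjq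
    have h2 : D α jq ≤ D α (jp + 1) := D_anti α (by omega)
    omega
  · right
    refine ⟨hh.symm, ?_⟩
    subst hh
    omega
  · left; exact hh

lemma cd_of_pos {α : List ℕ} {j i : ℕ} (hj : j < α.length) (hi : i < part α (j + 1)) :
    (i + 1, j + 1) ∈ cd α :=
  (mem_cd α _ _).2 ⟨by omega, by omega, by omega, by omega⟩

lemma invW_wR_subset_src {n : ℕ} {α : List ℕ} (hpk : IsPeakComposition n α)
    {T : ℕ × ℕ → ℕ} (hT : IsSPIT α T) :
    InvW (wR α T) ⊆ InvW (wR α (Tsource α)) := by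
  rintro ⟨p, q⟩ hmem
  obtain ⟨hp1, hpq, hqlen, hval⟩ := hmem
  rw [wR_length] at hqlen
  obtain ⟨jp, hjp, ip, hip, hpe⟩ := pos_exists α (show p - 1 < α.sum by omega)
  obtain ⟨jq, hjq, iq, hiq, hqe⟩ := pos_exists α (show q - 1 < α.sum by omega)
  rw [hpe, hqe, wR_getD α T hjq hiq, wR_getD α T hjp hip] at hval
  have horder := pos_order α hjq hiq (show D α (jp+1) + ip < D α (jq+1) + iq by omega)
  have hca := cd_of_pos hjp hip
  have hcb := cd_of_pos hjq hiq
  refine ⟨hp1, hpq, by rw [wR_length]; omega, ?_⟩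
  simp only
  rw [hpe, hqe, wR_getD α (Tsource α) hjq hiq, wR_getD α (Tsource α) hjp hip]
  rcases horder with hlt | ⟨rfl, hii⟩
  · exact src_cross hca hcb (by omega)
  · exfalso
    exact absurd (row_chain hT.1.2.1 (iq + 1) (ip + 1) (by omega) (by omega) hcb) (by omega)

lemma invW_sink_subset_wR {n : ℕ} {α : List ℕ} (hpk : IsPeakComposition n α)
    {T : ℕ × ℕ → ℕ} (hT : IsSPIT α T) :
    InvW (wR α (Tsink α)) ⊆ InvW (wR α T) := by
  rintro ⟨p, q⟩ hmem
  obtain ⟨hp1, hpq, hqlen, hval⟩ := hmem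
  rw [wR_length] at hqlen
  obtain ⟨jp, hjp, ip, hip, hpe⟩ := pos_exists α (show p - 1 < α.sum by omega)
  obtain ⟨jq, hjq, iq, hiq, hqe⟩ := pos_exists α (show q - 1 < α.sum by omega)
  rw [hpe, hqe, wR_getD α (Tsink α) hjq hiq, wR_getD α (Tsink α) hjp hip] at hval
  have horder := pos_order α hjq hiq (show D α (jp+1) + ip < D α (jq+1) + iq by omega)
  have hca := cd_of_pos hjp hip
  have hcb := cd_of_pos hjq hiq
  -- structure: jq < jp and iq + 1 ≤ 2
  have hstruct : jq < jp ∧ iq + 1 ≤ 2 := by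
    rcases horder with hlt | ⟨rfl, hii⟩
    · refine ⟨hlt, ?_⟩
      by_contra hh
      exact absurd (sink_F2b hpk hca hcb (by omega) (by omega)) (by omega)
    · exact absurd (sink_F2a hpk hca hcb (by omega)) (by omega)
  refine ⟨hp1, hpq, by rw [wR_length]; omega, ?_⟩
  simp only
  rw [hpe, hqe, wR_getD α T hjq hiq, wR_getD α T hjp hip]
  have h2cd : (2, jq + 1) ∈ cd α := (mem_cd α _ _).2
    ⟨by omega, by omega, by omega, part_two_of_peak hpk (by omega) (by omega)⟩
  calc T (iq + 1, jq + 1) ≤ T (2, jq + 1) := row_chain_le hT.1.2.1 (by omega) (by omega) h2cd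
    _ < T (1, jp + 1) := cross_chain hpk hT (jp + 1) (by omega) (by omega) (by omega)
    _ ≤ T (ip + 1, jp + 1) := row_chain_le hT.1.2.1 (by omega) (by omega) hca

lemma backward_condA {n : ℕ} {α : List ℕ} (hpk : IsPeakComposition n α) {w : List ℕ}
    (hperm : IsPermWord α.sum w) (hsrc : InvW w ⊆ InvW (wR α (Tsource α))) :
    ∀ j, j < α.length → ∀ i, i + 1 < part α (j + 1) →
      w.getD (D α (j + 1) + i) 0 < w.getD (D α (j + 1) + i + 1) 0 := by
  intro j hj i hi
  have hlen := permWord_length hperm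
  have hq0 : D α (j + 1) + (i + 1) < α.sum := pos_lt α hj hi
  have hne := nodup_getD_ne (permWord_nodup hperm) (p := D α (j+1) + i)
    (q := D α (j+1) + i + 1) (by omega) (by omega) (by omega)
  by_contra hge
  have hgt : w.getD (D α (j+1) + i + 1) 0 < w.getD (D α (j+1) + i) 0 := by
    rcases Nat.lt_trichotomy (w.getD (D α (j+1) + i + 1) 0) (w.getD (D α (j+1) + i) 0)
      with h | h | h
    · exact h
    · exact absurd h.symm hne
    · exact absurd h hge
  have hmem : ((D α (j+1) + i + 1, D α (j+1) + i + 2) : ℕ × ℕ) ∈ InvW w := by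
    refine ⟨by omega, by omega, by omega, ?_⟩
    show w.getD (D α (j+1) + i + 2 - 1) 0 < w.getD (D α (j+1) + i + 1 - 1) 0
    have e1 : D α (j+1) + i + 2 - 1 = D α (j+1) + i + 1 := by omega
    have e2 : D α (j+1) + i + 1 - 1 = D α (j+1) + i := by omega
    rw [e1, e2]
    exact hgt
  obtain ⟨-, -, -, hsv⟩ := hsrc hmem
  simp only at hsv
  have hv1 : (wR α (Tsource α)).getD (D α (j+1) + i + 2 - 1) 0 = Tsource α (i + 2, j + 1) := by
    have := wR_getD α (Tsource α) hj hi
    have e1 : D α (j+1) + i + 2 - 1 = D α (j+1) + (i + 1) := by omega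
    rw [e1, this]
  have hv2 : (wR α (Tsource α)).getD (D α (j+1) + i + 1 - 1) 0 = Tsource α (i + 1, j + 1) := by
    have := wR_getD α (Tsource α) hj (show i < part α (j+1) by omega)
    have e2 : D α (j+1) + i + 1 - 1 = D α (j+1) + i := by omega
    rw [e2, this]
  rw [hv1, hv2] at hsv
  have hss : Tsource α (i + 1, j + 1) < Tsource α (i + 2, j + 1) :=
    src_row (by exact cd_of_pos hj (by omega)) (by exact cd_of_pos hj hi) (by omega)
  omega

lemma backward_condC {n : ℕ} {α : List ℕ} (hpk : IsPeakComposition n α) {w : List ℕ}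
    (hperm : IsPermWord α.sum w) (hsink : InvW (wR α (Tsink α)) ⊆ InvW w) :
    ∀ j, j + 2 ≤ α.length →
      w.getD (D α (j + 1) + 1) 0 < w.getD (D α (j + 2)) 0 := by
  intro j hj
  have hlen := permWord_length hperm
  have hiq : 1 < part α (j + 1) := part_two_of_peak hpk (by omega) (by omega)
  have hip : (0 : ℕ) < part α (j + 1 + 1) := part_pos_of_comp hpk.1 (by omega) (by omega)
  have hq0 : D α (j + 1) + 1 < α.sum := pos_lt α (show j < α.length by omega) hiq
  have hD : D α (j + 1) = part α (j + 1 + 1) + D α (j + 1 + 1) :=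
    D_succ α (show j + 1 < α.length by omega)
  have hDe : D α (j + 1 + 1) = D α (j + 2) := by norm_num
  have hparte : part α (j + 1 + 1) = part α (j + 2) := by norm_num
  have hp0 : D α (j + 2) < α.sum := by omega
  have hporder : D α (j + 2) < D α (j + 1) + 1 := by omega
  have hvq : (wR α (Tsink α)).getD (D α (j + 1) + 1) 0 = Tsink α (2, j + 1) :=
    wR_getD α (Tsink α) (show j < α.length by omega) hiq
  have hvp : (wR α (Tsink α)).getD (D α (j + 2)) 0 = Tsink α (1, j + 2) := by
    have := wR_getD α (Tsink α) (show j + 1 < α.length by omega) hip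
    rw [← hDe]
    simpa using this
  have hcq : (2, j + 1) ∈ cd α := cd_of_pos (show j < α.length by omega) hiq
  have hcp : (1, j + 2) ∈ cd α := by
    have := cd_of_pos (show j + 1 < α.length by omega) hip
    simpa using this
  have hmem : ((D α (j + 2) + 1, D α (j + 1) + 2) : ℕ × ℕ) ∈ InvW (wR α (Tsink α)) := by
    refine ⟨by omega, by omega, by rw [wR_length]; omega, ?_⟩
    show (wR α (Tsink α)).getD (D α (j+1) + 2 - 1) 0 <
      (wR α (Tsink α)).getD (D α (j+2) + 1 - 1) 0
    have e1 : D α (j+1) + 2 - 1 = D α (j+1) + 1 := by omega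
    have e2 : D α (j+2) + 1 - 1 = D α (j+2) := by omega
    rw [e1, e2, hvq, hvp]
    exact sink_F1 hpk hcp hcq (by omega) (by omega)
  obtain ⟨-, -, -, hsv⟩ := hsink hmem
  simp only at hsv
  have e1 : D α (j+1) + 2 - 1 = D α (j+1) + 1 := by omega
  have e2 : D α (j+2) + 1 - 1 = D α (j+2) := by omega
  rw [e1, e2] at hsv
  exact hsv

/-! ### Section 7a: downward closed counting and PeakCond -/

lemma dc_card {m : ℕ} {S : Finset ℕ} (hS : S ⊆ Finset.Icc 1 m)
    (hdc : ∀ a ∈ S, ∀ b, 1 ≤ b → b ≤ a → b ∈ S) :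
    ∀ x, x ∈ S ↔ 1 ≤ x ∧ x ≤ S.card := by
  intro x
  constructor
  · intro hx
    have hx1 : 1 ≤ x := (Finset.mem_Icc.1 (hS hx)).1
    refine ⟨hx1, ?_⟩
    have hsub : Finset.Icc 1 x ⊆ S := by
      intro b hb
      have := Finset.mem_Icc.1 hb
      exact hdc x hx b this.1 this.2
    calc x = (Finset.Icc 1 x).card := by rw [Nat.card_Icc]; omega
      _ ≤ S.card := Finset.card_le_card hsub
  · rintro ⟨hx1, hx2⟩
    by_contra hxS
    have hsub : S ⊆ Finset.Icc 1 (x - 1) := by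
      intro a ha
      have ha' := Finset.mem_Icc.1 (hS ha)
      rw [Finset.mem_Icc]
      refine ⟨ha'.1, ?_⟩
      by_contra hax
      exact hxS (hdc a ha x hx1 (by omega))
    have := Finset.card_le_card hsub
    rw [Nat.card_Icc] at this
    omega

lemma list_range_map_sum (f : ℕ → ℕ) (m : ℕ) :
    ((List.range m).map f).sum = ∑ r ∈ Finset.range m, f r := by
  induction m with
  | zero => simp
  | succ t ih => rw [List.range_succ, Finset.sum_range_succ, List.map_append]; simp [ih]

/-- The peak condition holds for any standard tableau satisfying the `tabC` inequality. -/
lemma peakCond_of {n : ℕ} {α : List ℕ} (hpk : IsPeakComposition n α) {T : ℕ × ℕ → ℕ}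
    (hsf : IsStandardFilling α T) (hrow : RowsIncrease α T) (hcol : FirstColIncreases α T)
    (htC : ∀ j, 1 ≤ j → j + 1 ≤ α.length → T (2, j) < T (1, j + 1)) :
    PeakCond α T := by
  intro k hk1 hk2
  set L : ℕ → ℕ := fun j => ((Finset.Icc 1 (part α j)).filter fun i => T (i, j) ≤ k).card
    with hL
  -- row prefix property
  have hLiff : ∀ j, 1 ≤ j → j ≤ α.length →
      ∀ i, (1 ≤ i ∧ i ≤ part α j ∧ T (i, j) ≤ k) ↔ (1 ≤ i ∧ i ≤ L j) := by
    intro j hj1 hj2 i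
    have key := dc_card (S := (Finset.Icc 1 (part α j)).filter fun i => T (i, j) ≤ k)
      (Finset.filter_subset _ _) ?_ i
    · rw [Finset.mem_filter, Finset.mem_Icc] at key
      constructor
      · rintro ⟨h1, h2, h3⟩; exact key.1 ⟨⟨h1, h2⟩, h3⟩
      · intro h
        obtain ⟨⟨h1, h2⟩, h3⟩ := key.2 h
        exact ⟨h1, h2, h3⟩
    · intro a ha b hb1 hba
      rw [Finset.mem_filter, Finset.mem_Icc] at ha ⊢
      have hacd : (a, j) ∈ cd α := (mem_cd α a j).2 ⟨ha.1.1, hj1, hj2, ha.1.2⟩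
      refine ⟨⟨hb1, by omega⟩, ?_⟩
      exact le_trans (row_chain_le hrow hb1 hba hacd) ha.2
  have hLle : ∀ j, L j ≤ part α j := by
    intro j
    calc L j ≤ (Finset.Icc 1 (part α j)).card := Finset.card_filter_le _ _
      _ = part α j := by rw [Nat.card_Icc]; omega
  set M := (Finset.Icc 1 α.length).filter fun j => 0 < L j with hM
  set m := M.card with hm
  have hMiff : ∀ j, (1 ≤ j ∧ j ≤ α.length ∧ 0 < L j) ↔ (1 ≤ j ∧ j ≤ m) := by
    intro j
    have key := dc_card (S := M) (Finset.filter_subset _ _) ?_ j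
    · rw [hM, Finset.mem_filter, Finset.mem_Icc] at key
      constructor
      · rintro ⟨h1, h2, h3⟩; exact key.1 ⟨⟨h1, h2⟩, h3⟩
      · intro h
        obtain ⟨⟨h1, h2⟩, h3⟩ := key.2 h
        exact ⟨h1, h2, h3⟩
    · intro a ha b hb1 hba
      rw [hM, Finset.mem_filter, Finset.mem_Icc] at ha ⊢
      have hpa : 1 ≤ part α a := part_pos_of_comp hpk.1 ha.1.1 ha.1.2
      have hT1a : T (1, a) ≤ k :=
        (((hLiff a ha.1.1 ha.1.2 1).2 ⟨le_refl _, ha.2⟩)).2.2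
      have hacd : (1, a) ∈ cd α := (mem_cd α 1 a).2 ⟨le_refl _, ha.1.1, ha.1.2, hpa⟩
      have hT1b : T (1, b) ≤ k := le_trans (col_chain_le hpk hcol hb1 hba hacd) hT1a
      have hpb : 1 ≤ part α b := part_pos_of_comp hpk.1 hb1 (by omega)
      have : 1 ≤ L b := ((hLiff b hb1 (by omega) 1).1 ⟨le_refl _, hpb, hT1b⟩).2
      exact ⟨⟨hb1, by omega⟩, by omega⟩
  have hmle : m ≤ α.length := by
    rw [hm, hM]
    calc ((Finset.Icc 1 α.length).filter fun j => 0 < L j).card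
        ≤ (Finset.Icc 1 α.length).card := Finset.card_filter_le _ _
      _ = α.length := by rw [Nat.card_Icc]; omega
  refine ⟨(List.range m).map fun r => L (r + 1), ⟨⟨?_, ?_⟩, ?_⟩, ?_⟩
  · -- parts positive
    intro a ha
    rw [List.mem_map] at ha
    obtain ⟨r, hr, rfl⟩ := ha
    rw [List.mem_range] at hr
    have := (hMiff (r + 1)).2 ⟨by omega, by omega⟩
    exact this.2.2
  · -- sum = k
    rw [list_range_map_sum]
    -- card of the filtered cell set is k
    set Scells := (cd α).filter fun p => T p ≤ k with hSc
    have hcard1 : Scells.card = k := by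
      have himg : Scells.image T = Finset.Icc 1 k := by
        ext v
        rw [Finset.mem_image, Finset.mem_Icc]
        constructor
        · rintro ⟨p, hp, rfl⟩
          rw [hSc, Finset.mem_filter] at hp
          have := hsf.1.mapsTo hp.1
          simp only [Set.mem_Icc] at this
          exact ⟨this.1, hp.2⟩
        · rintro ⟨hv1, hv2⟩
          obtain ⟨p, hpcd, hTv⟩ := hsf.1.surjOn (Set.mem_Icc.2 ⟨hv1, by omega⟩)
          refine ⟨p, ?_, hTv⟩
          rw [hSc, Finset.mem_filter]
          exact ⟨hpcd, by omega⟩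
      have hinj : Set.InjOn T ↑Scells := by
        apply hsf.1.injOn.mono
        intro p hp
        rw [hSc] at hp
        simp only [Finset.coe_filter, Set.mem_setOf_eq] at hp
        exact hp.1
      have := Finset.card_image_of_injOn hinj
      rw [himg, Nat.card_Icc] at this
      omega
    have hcard2 : Scells.card = ∑ j ∈ Finset.Icc 1 α.length, L j := by
      rw [Finset.card_eq_sum_card_fiberwise (f := Prod.snd) (t := Finset.Icc 1 α.length) ?_]
      · apply Finset.sum_congr rfl
        intro j hj
        rw [Finset.mem_Icc] at hj
        rw [hL]
        apply Finset.card_bij (fun p _ => p.1)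
        · rintro ⟨i', j'⟩ hp
          simp only [Finset.mem_filter] at hp
          obtain ⟨hp1, hp2⟩ := hp
          rw [hSc, Finset.mem_filter] at hp1
          have hcd := (mem_cd α i' j').1 hp1.1
          have hj' : j' = j := hp2
          subst hj'
          rw [Finset.mem_filter, Finset.mem_Icc]
          exact ⟨⟨hcd.1, hcd.2.2.2⟩, hp1.2⟩
        · rintro ⟨i1, j1⟩ hp1 ⟨i2, j2⟩ hp2 heq
          simp only [Finset.mem_filter] at hp1 hp2
          have heq' : i1 = i2 := heq
          have hj1' : j1 = j := hp1.2
          have hj2' : j2 = j := hp2.2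
          simp only [Prod.mk.injEq]
          exact ⟨heq', by rw [hj1', hj2']⟩
        · intro i hi
          rw [Finset.mem_filter, Finset.mem_Icc] at hi
          refine ⟨(i, j), ?_, rfl⟩
          rw [Finset.mem_filter, hSc, Finset.mem_filter]
          exact ⟨⟨(mem_cd α i j).2 ⟨hi.1.1, hj.1, hj.2, hi.1.2⟩, hi.2⟩, rfl⟩
      · rintro ⟨a, b⟩ hp
        rw [hSc, Finset.mem_coe, Finset.mem_filter] at hp
        have hcd := (mem_cd α a b).1 hp.1
        rw [Finset.mem_coe, Finset.mem_Icc]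
        exact ⟨hcd.2.1, hcd.2.2.1⟩
    have hcard3 : ∑ j ∈ Finset.Icc 1 α.length, L j = ∑ j ∈ Finset.Icc 1 m, L j := by
      symm
      apply Finset.sum_subset
      · intro j hj
        rw [Finset.mem_Icc] at hj ⊢
        omega
      · intro j hj hj'
        rw [Finset.mem_Icc] at hj hj'
        by_contra hLj
        have := (hMiff j).1 ⟨hj.1, hj.2, by omega⟩
        omega
    have hcard4 : ∑ j ∈ Finset.Icc 1 m, L j = ∑ r ∈ Finset.range m, L (r + 1) := by
      rw [← Finset.Ico_add_one_right_eq_Icc, Finset.sum_Ico_eq_sum_range]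
      apply Finset.sum_congr (by norm_num)
      intro r _
      congr 1
      omega
    omega
  · -- peak condition
    intro r hr
    rw [List.length_map, List.length_range] at hr
    have hget : (((List.range m).map fun r => L (r + 1)).getD r 0) = L (r + 1) := by
      rw [List.getD_eq_getElem _ _ (by simp; omega)]
      simp
    rw [hget]
    have hr2m := (hMiff (r + 2)).2 ⟨by omega, by omega⟩
    have hr2ℓ : r + 2 ≤ α.length := by omega
    have hT1 : T (1, r + 2) ≤ k :=
      ((hLiff (r + 2) (by omega) hr2ℓ 1).2 ⟨le_refl _, hr2m.2.2⟩).2.2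
    have hT2 : T (2, r + 1) ≤ k := le_of_lt (lt_of_lt_of_le (htC (r + 1) (by omega) hr2ℓ) hT1)
    have hp2 : 2 ≤ part α (r + 1) := part_two_of_peak hpk (by omega) (by omega)
    have := ((hLiff (r + 1) (by omega) (by omega) 2).1 ⟨by omega, hp2, hT2⟩).2
    omega
  · -- cd β = filtered cells
    ext p
    obtain ⟨i, j⟩ := p
    have hβlen : ((List.range m).map fun r => L (r + 1)).length = m := by simp
    have hβpart : ∀ j', 1 ≤ j' → j' ≤ m →
        part ((List.range m).map fun r => L (r + 1)) j' = L j' := by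
      intro j' h1 h2
      rw [part, List.getD_eq_getElem _ _ (by simp; omega)]
      simp only [List.getElem_map, List.getElem_range]
      congr 1
      omega
    rw [Finset.mem_filter, mem_cd α i j, mem_cd _ i j, hβlen]
    constructor
    · rintro ⟨hb, hTk⟩
      have hiL : i ≤ L j := ((hLiff j hb.2.1 hb.2.2.1 i).1 ⟨hb.1, hb.2.2.2, hTk⟩).2
      have hjm : j ≤ m := ((hMiff j).1 ⟨hb.2.1, hb.2.2.1, by omega⟩).2
      refine ⟨hb.1, hb.2.1, hjm, ?_⟩
      rw [hβpart j hb.2.1 hjm]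
      exact hiL
    · rintro ⟨hi1, hj1, hjm, hiL⟩
      rw [hβpart j hj1 hjm] at hiL
      have hjℓ : j ≤ α.length := by omega
      have hiP : i ≤ part α j := le_trans hiL (hLle j)
      refine ⟨⟨hi1, hj1, hjℓ, hiP⟩, ?_⟩
      exact ((hLiff j hj1 hjℓ i).2 ⟨hi1, hiL⟩).2.2

/-! ### Section 7b: reconstruction of a tableau from a word -/

def Tof (α : List ℕ) (w : List ℕ) : ℕ × ℕ → ℕ := fun p =>
  if p ∈ cd α then w.getD (D α p.2 + (p.1 - 1)) 0 else 0

lemma Tof_val' {α w : List ℕ} {j0 i0 : ℕ} (hj : j0 < α.length) (hi : i0 < part α (j0 + 1)) :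
    Tof α w (i0 + 1, j0 + 1) = w.getD (D α (j0 + 1) + i0) 0 := by
  rw [Tof, if_pos (cd_of_pos hj hi)]
  simp

lemma Tof_spit {n : ℕ} {α : List ℕ} (hpk : IsPeakComposition n α) {w : List ℕ}
    (hperm : IsPermWord α.sum w)
    (hA : ∀ j, j < α.length → ∀ i, i + 1 < part α (j + 1) →
      w.getD (D α (j + 1) + i) 0 < w.getD (D α (j + 1) + i + 1) 0)
    (hC : ∀ j, j + 2 ≤ α.length →
      w.getD (D α (j + 1) + 1) 0 < w.getD (D α (j + 2)) 0) :
    IsSPIT α (Tof α w) ∧ wR α (Tof α w) = w := by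
  have hwlen : w.length = α.sum := permWord_length hperm
  -- Rows increase
  have hrow : RowsIncrease α (Tof α w) := by
    intro i j h h1
    have hcd := (mem_cd α i j).1 h
    have hcd1 := (mem_cd α (i + 1) j).1 h1
    obtain ⟨j0, rfl⟩ : ∃ j0, j = j0 + 1 := ⟨j - 1, by omega⟩
    obtain ⟨i0, rfl⟩ : ∃ i0, i = i0 + 1 := ⟨i - 1, by omega⟩
    have hj0 : j0 < α.length := by omega
    have hi0 : i0 < part α (j0 + 1) := by omega
    have hi0' : i0 + 1 < part α (j0 + 1) := by omega
    rw [Tof_val' hj0 hi0, show ((i0 + 1 + 1 : ℕ), (j0 + 1 : ℕ)) = ((i0 + 1) + 1, j0 + 1) from rfl,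
      Tof_val' hj0 hi0']
    exact hA j0 hj0 i0 hi0'
  -- tabC
  have htC : ∀ j, 1 ≤ j → j + 1 ≤ α.length → Tof α w (2, j) < Tof α w (1, j + 1) := by
    intro j hj1 hj2
    obtain ⟨j0, rfl⟩ : ∃ j0, j = j0 + 1 := ⟨j - 1, by omega⟩
    have h2 : 1 < part α (j0 + 1) := part_two_of_peak hpk (by omega) (by omega)
    have h1 : 0 < part α (j0 + 2) := part_pos_of_comp hpk.1 (by omega) (by omega)
    have e1 : Tof α w (2, j0 + 1) = w.getD (D α (j0 + 1) + 1) 0 := Tof_val' (by omega) h2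
    have e2 : Tof α w (1, j0 + 2) = w.getD (D α (j0 + 2)) 0 := by
      have := Tof_val' (w := w) (show j0 + 1 < α.length by omega) (i0 := 0) (by exact h1)
      simpa using this
    rw [e1, e2]
    exact hC j0 (by omega)
  -- first column increases
  have hcol : FirstColIncreases α (Tof α w) := by
    intro j h h1
    have hcd := (mem_cd α 1 j).1 h
    have hcd1 := (mem_cd α 1 (j + 1)).1 h1
    obtain ⟨j0, rfl⟩ : ∃ j0, j = j0 + 1 := ⟨j - 1, by omega⟩
    have h2 : 1 < part α (j0 + 1) := part_two_of_peak hpk (by omega) (by omega)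
    have hfirst : Tof α w (1, j0 + 1) = w.getD (D α (j0 + 1)) 0 := by
      have := Tof_val' (w := w) (show j0 < α.length by omega) (i0 := 0) (by omega)
      simpa using this
    have hsecond : Tof α w (2, j0 + 1) = w.getD (D α (j0 + 1) + 1) 0 := Tof_val' (by omega) h2
    have step1 : Tof α w (1, j0 + 1) < Tof α w (2, j0 + 1) := by
      rw [hfirst, hsecond]
      have := hA j0 (by omega) 0 (by omega)
      simpa using this
    exact lt_trans step1 (htC (j0 + 1) (by omega) (by omega))
  -- standard filling
  have hsf : IsStandardFilling α (Tof α w) := by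
    constructor
    · constructor
      · -- maps to
        rintro ⟨i, j⟩ hp
        have hcd := (mem_cd α i j).1 hp
        obtain ⟨j0, rfl⟩ : ∃ j0, j = j0 + 1 := ⟨j - 1, by omega⟩
        obtain ⟨i0, rfl⟩ : ∃ i0, i = i0 + 1 := ⟨i - 1, by omega⟩
        rw [Set.mem_Icc, Tof_val' (by omega) (by omega)]
        have hmem : w.getD (D α (j0 + 1) + i0) 0 ∈ w :=
          getD_mem_of_lt (by rw [hwlen]; exact pos_lt α (by omega) (by omega))
        have := (permWord_mem hperm).1 hmem
        exact this
      constructor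
      · -- injective
        rintro ⟨i, j⟩ hp ⟨i', j'⟩ hp' hval
        simp only [Set.mem_setOf_eq, Finset.mem_coe] at hp hp'
        have hcd := (mem_cd α i j).1 hp
        have hcd' := (mem_cd α i' j').1 hp'
        obtain ⟨j0, rfl⟩ : ∃ j0, j = j0 + 1 := ⟨j - 1, by omega⟩
        obtain ⟨i0, rfl⟩ : ∃ i0, i = i0 + 1 := ⟨i - 1, by omega⟩
        obtain ⟨j0', rfl⟩ : ∃ j1, j' = j1 + 1 := ⟨j' - 1, by omega⟩
        obtain ⟨i0', rfl⟩ : ∃ i1, i' = i1 + 1 := ⟨i' - 1, by omega⟩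
        rw [Tof_val' (by omega) (by omega), Tof_val' (by omega) (by omega)] at hval
        by_cases hpos : D α (j0 + 1) + i0 = D α (j0' + 1) + i0'
        · have := pos_inj α (by omega) (show i0 < part α (j0+1) by omega) (by omega)
            (show i0' < part α (j0'+1) by omega) hpos
          simp only [Prod.mk.injEq]
          omega
        · exfalso
          exact nodup_getD_ne (permWord_nodup hperm)
            (by rw [hwlen]; exact pos_lt α (by omega) (by omega))
            (by rw [hwlen]; exact pos_lt α (by omega) (by omega)) hpos hval
      · -- surjective
        intro v hv
        rw [Set.mem_Icc] at hv
        have hvw : v ∈ w := (permWord_mem hperm).2 hv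
        obtain ⟨idx, hidx, hval⟩ := List.mem_iff_getElem.1 hvw
        rw [hwlen] at hidx
        obtain ⟨j0, hj0, i0, hi0, rfl⟩ := pos_exists α hidx
        refine ⟨(i0 + 1, j0 + 1), ?_, ?_⟩
        · exact cd_of_pos hj0 hi0
        · rw [Tof_val' hj0 hi0, List.getD_eq_getElem _ _ (by omega)]
          exact hval
    · intro p hp
      rw [Tof, if_neg hp]
  refine ⟨⟨⟨hsf, hrow, hcol⟩, peakCond_of hpk hsf hrow hcol htC⟩, ?_⟩
  -- reconstruction
  apply List.ext_getElem (by rw [wR_length, hwlen])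
  intro idx h1 h2
  have hidx : idx < α.sum := by rwa [wR_length] at h1
  obtain ⟨j0, hj0, i0, hi0, rfl⟩ := pos_exists α hidx
  rw [← List.getD_eq_getElem _ 0 h1, ← List.getD_eq_getElem _ 0 h2,
    wR_getD α _ hj0 hi0, Tof_val' hj0 hi0]


/-- For a peak composition `α` of `n`, the set of row reading words of SPITs
of shape `α` is the left weak Bruhat interval `[w_r(T^sink_α), w_r(T^source_α)]_L` in `S_n`
(the left weak order being inclusion of inversion sets). -/
theorem RWr_eq_interval (n : ℕ) (α : List ℕ) (hα : IsPeakComposition n α) :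
    RWr α =
      {w : List ℕ | IsPermWord n w ∧
        InvW (wR α (Tsink α)) ⊆ InvW w ∧ InvW w ⊆ InvW (wR α (Tsource α))} := by
  have hsum : α.sum = n := hα.1.2
  ext w
  simp only [RWr, Set.mem_setOf_eq]
  constructor
  · rintro ⟨T, hT, rfl⟩
    refine ⟨?_, invW_sink_subset_wR hα hT, invW_wR_subset_src hα hT⟩
    have := wR_isPermWord hT.1.1
    rwa [hsum] at this
  · rintro ⟨hperm, hsink, hsrc⟩
    have hperm' : IsPermWord α.sum w := by rwa [hsum]
    obtain ⟨hspit, hw⟩ := Tof_spit hα hperm' (backward_condA hα hperm' hsrc)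
      (backward_condC hα hperm' hsink)
    exact ⟨Tof α w, hspit, hw.symm⟩

end PaperSPIT
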